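/- For any graph G on n vertices, the minimum number of clique flips t(G) needed to realize G is at least minrank₂(G); combined with the upper bound, minrank₂(G) ≤ t(G) ≤ minrank₂(G) + 1. -/

import Mathlib

/-- Adjacency matrix over GF(2) of the complete graph on the vertex subset `S`. -/
def cliqueAdj (n : ℕ) (S : Finset (Fin n)) : Matrix (Fin n) (Fin n) (ZMod 2) :=
  Matrix.of fun i j => if i ≠ j ∧ i ∈ S ∧ j ∈ S then 1 else 0

/-- `M` is realized (off the diagonal) by the XOR of `m` clique adjacency matrices. -/
def realizes (n m : ℕ) (M : Matrix (Fin n) (Fin n) (ZMod 2)) : Prop :=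
  ∃ S : Fin m → Finset (Fin n),
    ∀ i j : Fin n, i ≠ j → M i j = ∑ t : Fin m, cliqueAdj n (S t) i j

/-- `t(G)`: minimum number of clique flips realizing `M`. -/
noncomputable def tG (n : ℕ) (M : Matrix (Fin n) (Fin n) (ZMod 2)) : ℕ :=
  sInf {m | realizes n m M}

/-- `minrank₂(G) = min { rank(D + G) : D diagonal }` over GF(2). -/
noncomputable def minrank2 (n : ℕ) (M : Matrix (Fin n) (Fin n) (ZMod 2)) : ℕ :=
  sInf {r | ∃ D : Matrix (Fin n) (Fin n) (ZMod 2), D.IsDiag ∧ (D + M).rank = r}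

namespace MinrankAux

open Matrix Finset

variable {n : ℕ}

lemma z2 : ∀ a : ZMod 2, a = 0 ∨ a = 1 := by decide
lemma z2mul : ∀ a : ZMod 2, a * a = a := by decide
lemma z2add : ∀ a : ZMod 2, a + a = 0 := by decide
lemma z2addne : ∀ {a b : ZMod 2}, a ≠ b → a + b ≠ 0 := by decide

/-- Over GF(2), the quadratic form of a symmetric matrix is given by its diagonal. -/
lemma quadform (A : Matrix (Fin n) (Fin n) (ZMod 2)) (hA : A.IsSymm)
    (x : Fin n → ZMod 2) : x ⬝ᵥ (A *ᵥ x) = (fun k => A k k) ⬝ᵥ x := by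
  classical
  have hsym : ∀ i j, A j i = A i j := fun i j => congrFun (congrFun hA i) j
  have h1 : x ⬝ᵥ (A *ᵥ x) = ∑ p ∈ Finset.univ ×ˢ Finset.univ,
      x p.1 * (A p.1 p.2 * x p.2) := by
    rw [Finset.sum_product]
    simp only [dotProduct, mulVec, Finset.mul_sum]
  rw [h1, ← Finset.sum_filter_add_sum_filter_not (Finset.univ ×ˢ Finset.univ)
    (fun p => p.1 = p.2)]
  have h2 : ∑ p ∈ (Finset.univ ×ˢ Finset.univ).filter (fun p => ¬ p.1 = p.2),
      x p.1 * (A p.1 p.2 * x p.2) = 0 := by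
    refine Finset.sum_involution (fun p _ => p.swap) ?_ ?_ ?_ ?_
    · intro p hp
      have h' : x p.2 * (A p.2 p.1 * x p.1) = x p.1 * (A p.1 p.2 * x p.2) := by
        rw [hsym]; ring
      show x p.1 * (A p.1 p.2 * x p.2) + x p.swap.1 * (A p.swap.1 p.swap.2 * x p.swap.2) = 0
      rw [Prod.fst_swap, Prod.snd_swap, h']
      exact z2add _
    · intro p hp _
      simp only [Finset.mem_filter, Finset.mem_product, Finset.mem_univ, true_and] at hp
      intro hc
      exact hp ((congrArg Prod.fst hc).symm)
    · intro p hp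
      simp only [Finset.mem_filter, Finset.mem_product, Finset.mem_univ, true_and,
        Prod.fst_swap, Prod.snd_swap] at hp ⊢
      exact fun h => hp h.symm
    · intro p hp; rfl
  rw [h2, add_zero]
  have h3 : ∑ p ∈ (Finset.univ ×ˢ Finset.univ).filter (fun p => p.1 = p.2),
      x p.1 * (A p.1 p.2 * x p.2) = ∑ k : Fin n, x k * (A k k * x k) := by
    refine Finset.sum_nbij' (fun p => p.1) (fun k => (k, k)) ?_ ?_ ?_ ?_ ?_
    · intro p hp; exact Finset.mem_univ _
    · intro k hk
      simp only [Finset.mem_filter, Finset.mem_product, Finset.mem_univ, true_and]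
    · intro p hp
      simp only [Finset.mem_filter, Finset.mem_product, Finset.mem_univ, true_and] at hp
      exact Prod.ext rfl hp
    · intro k hk; rfl
    · intro p hp
      simp only [Finset.mem_filter, Finset.mem_product, Finset.mem_univ, true_and] at hp
      simp only [← hp]
  rw [h3]
  simp only [dotProduct]
  congr 1
  funext k
  have : x k * (A k k * x k) = A k k * (x k * x k) := by ring
  rw [this, z2mul, mul_comm]

lemma vecMulVec_mulVec (c d z : Fin n → ZMod 2) :
    (Matrix.vecMulVec c d) *ᵥ z = (d ⬝ᵥ z) • c := by
  funext i
  simp only [Matrix.mulVec, dotProduct, Matrix.vecMulVec_apply, Pi.smul_apply,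
    smul_eq_mul]
  rw [Finset.sum_mul]
  exact Finset.sum_congr rfl fun j _ => by ring

lemma vecMulVec_symm (c : Fin n → ZMod 2) : (Matrix.vecMulVec c c).IsSymm := by
  ext i j
  simp only [Matrix.transpose_apply, Matrix.vecMulVec_apply, mul_comm]

lemma rank_vecMulVec_le (c d : Fin n → ZMod 2) : (Matrix.vecMulVec c d).rank ≤ 1 := by
  rw [Matrix.vecMulVec_eq Unit]
  refine (Matrix.rank_mul_le_left _ _).trans ?_
  refine (Matrix.rank_le_card_width _).trans ?_
  simp

lemma eq_zero_of_rank_eq_zero {A : Matrix (Fin n) (Fin n) (ZMod 2)}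
    (h : A.rank = 0) : A = 0 := by
  have hb : LinearMap.range A.mulVecLin = ⊥ := by
    rw [Matrix.rank] at h
    exact Submodule.finrank_eq_zero.mp h
  have h2 : ∀ v, A *ᵥ v = 0 := by
    intro v
    have : A.mulVecLin v ∈ LinearMap.range A.mulVecLin := LinearMap.mem_range_self _ v
    rw [hb] at this
    simpa using this
  ext i j
  have := congrFun (h2 (Pi.single j 1)) i
  simpa using this

lemma rank_add_le (A B : Matrix (Fin n) (Fin n) (ZMod 2)) :
    (A + B).rank ≤ A.rank + B.rank := by
  rw [Matrix.rank, Matrix.rank, Matrix.rank, Matrix.mulVecLin_add]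
  have h : LinearMap.range (A.mulVecLin + B.mulVecLin) ≤
      LinearMap.range A.mulVecLin ⊔ LinearMap.range B.mulVecLin := by
    rintro _ ⟨v, rfl⟩
    exact Submodule.mem_sup.mpr ⟨_, LinearMap.mem_range_self _ v, _,
      LinearMap.mem_range_self _ v, rfl⟩
  refine (Submodule.finrank_mono h).trans ?_
  have := Submodule.finrank_sup_add_finrank_inf_eq (LinearMap.range A.mulVecLin)
    (LinearMap.range B.mulVecLin)
  omega

lemma rank_sum_le (m : ℕ) (f : Fin m → (Fin n → ZMod 2)) :
    (∑ t : Fin m, Matrix.vecMulVec (f t) (f t)).rank ≤ m := by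
  have : ∀ s : Finset (Fin m),
      (∑ t ∈ s, Matrix.vecMulVec (f t) (f t)).rank ≤ s.card := by
    intro s
    induction s using Finset.induction_on with
    | empty => simp
    | @insert a s hx ih =>
      rw [Finset.sum_insert hx, Finset.card_insert_of_notMem hx]
      refine (rank_add_le _ _).trans ?_
      have := rank_vecMulVec_le (f a) (f a)
      omega
  exact (this Finset.univ).trans (by simp)

/-- Key rank-drop lemma: pivoting on `x` with `xᵀAx = 1` strictly reduces rank. -/
lemma rank_drop (A : Matrix (Fin n) (Fin n) (ZMod 2)) (hA : A.IsSymm)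
    (x : Fin n → ZMod 2) (hx : (fun k => A k k) ⬝ᵥ x = 1) :
    (A + Matrix.vecMulVec (A *ᵥ x) (A *ᵥ x)).rank + 1 ≤ A.rank := by
  classical
  set c := A *ᵥ x with hc
  set B := A + Matrix.vecMulVec c c with hB
  have hcx : c ⬝ᵥ x = 1 := by
    rw [hc, dotProduct_comm, quadform A hA x, hx]
  have hcne : c ≠ 0 := by
    intro h0
    rw [h0] at hcx
    simp at hcx
  have hxker : x ∉ LinearMap.ker A.mulVecLin := by
    intro h
    have : A *ᵥ x = 0 := h
    rw [← hc] at this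
    exact hcne this
  have hBx : B *ᵥ x = 0 := by
    rw [hB, Matrix.add_mulVec, vecMulVec_mulVec, hcx, one_smul, ← hc]
    funext i; exact z2add _
  have hker : LinearMap.ker A.mulVecLin ⊔ Submodule.span (ZMod 2) {x} ≤
      LinearMap.ker B.mulVecLin := by
    refine sup_le ?_ ?_
    · intro z hz
      have hz' : A *ᵥ z = 0 := hz
      have hcz : c ⬝ᵥ z = 0 := by
        rw [hc, dotProduct_comm, Matrix.dotProduct_mulVec, ← Matrix.mulVec_transpose, hA, hz']
        simp
      have : B *ᵥ z = 0 := by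
        rw [hB, Matrix.add_mulVec, hz', vecMulVec_mulVec, hcz, zero_smul, add_zero]
      exact this
    · rw [Submodule.span_le, Set.singleton_subset_iff]
      exact hBx
  have hlt : LinearMap.ker A.mulVecLin <
      LinearMap.ker A.mulVecLin ⊔ Submodule.span (ZMod 2) {x} := by
    refine lt_of_le_of_ne le_sup_left ?_
    intro he
    apply hxker
    rw [he]
    exact Submodule.mem_sup_right (Submodule.mem_span_singleton_self x)
  have h1 : Module.finrank (ZMod 2) (LinearMap.ker A.mulVecLin) <
      Module.finrank (ZMod 2) (LinearMap.ker B.mulVecLin) :=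
    lt_of_lt_of_le (Submodule.finrank_lt_finrank_of_lt hlt) (Submodule.finrank_mono hker)
  have hrnA := LinearMap.finrank_range_add_finrank_ker A.mulVecLin
  have hrnB := LinearMap.finrank_range_add_finrank_ker B.mulVecLin
  rw [Module.finrank_pi] at hrnA hrnB
  rw [Matrix.rank, Matrix.rank] at *
  omega

/-- Decomposition of a symmetric matrix with a nonzero diagonal entry (or zero)
into at most `rank` symmetric rank-one matrices. -/
lemma decomp : ∀ (r : ℕ) (A : Matrix (Fin n) (Fin n) (ZMod 2)), A.IsSymm → A.rank ≤ r →
    (A = 0 ∨ ∃ i, A i i ≠ 0) →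
    ∃ (m : ℕ) (f : Fin m → (Fin n → ZMod 2)),
      m ≤ r ∧ A = ∑ t : Fin m, Matrix.vecMulVec (f t) (f t) := by
  intro r
  induction r with
  | zero =>
    intro A hA hr _
    have : A = 0 := eq_zero_of_rank_eq_zero (Nat.le_zero.mp hr)
    exact ⟨0, Fin.elim0, le_refl _, by simp [this]⟩
  | succ r ih =>
    intro A hA hr hd
    rcases hd with h0 | ⟨i, hi⟩
    · exact ⟨0, Fin.elim0, Nat.zero_le _, by simp [h0]⟩
    set d : Fin n → ZMod 2 := fun k => A k k with hdd
    have hdi : d i = 1 := by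
      rcases z2 (d i) with h | h
      · exact absurd h hi
      · exact h
    by_cases hex : ∃ x, d ⬝ᵥ x = 1 ∧ A *ᵥ x ≠ d
    · obtain ⟨x, hx1, hx2⟩ := hex
      set c := A *ᵥ x with hc
      set B := A + Matrix.vecMulVec c c with hB
      have hBsymm : B.IsSymm := hA.add (vecMulVec_symm c)
      have hBrank : B.rank ≤ r := by
        have := rank_drop A hA x hx1
        rw [← hc, ← hB] at this
        omega
      have hBd : B = 0 ∨ ∃ j, B j j ≠ 0 := by
        right
        obtain ⟨j, hj⟩ : ∃ j, c j ≠ d j := by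
          by_contra hcon
          push_neg at hcon
          exact hx2 (funext hcon)
        refine ⟨j, ?_⟩
        have : B j j = d j + c j := by
          rw [hB, Matrix.add_apply, Matrix.vecMulVec_apply, z2mul]
        rw [this]
        exact z2addne (Ne.symm hj)
      obtain ⟨m, f, hm, hf⟩ := ih B hBsymm hBrank hBd
      refine ⟨m + 1, Fin.cons c f, by omega, ?_⟩
      have hvv : Matrix.vecMulVec c c + Matrix.vecMulVec c c =
          (0 : Matrix (Fin n) (Fin n) (ZMod 2)) := by
        ext k l; exact z2add _
      rw [Fin.sum_univ_succ]
      simp only [Fin.cons_zero, Fin.cons_succ]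
      rw [← hf, hB, add_left_comm, hvv, add_zero]
    · push_neg at hex
      have hAz : ∀ z, A *ᵥ z = (d ⬝ᵥ z) • d := by
        intro z
        rcases z2 (d ⬝ᵥ z) with h0 | h1
        · have hsi : d ⬝ᵥ (Pi.single i 1) = 1 := by
            rw [dotProduct_single, mul_one, hdi]
          have h1' : d ⬝ᵥ (z + Pi.single i 1) = 1 := by
            rw [dotProduct_add, h0, zero_add, hsi]
          have hz := hex _ h1'
          have hs := hex _ hsi
          rw [Matrix.mulVec_add, hs] at hz
          have hz0 : A *ᵥ z = 0 := add_right_cancel (hz.trans (zero_add d).symm)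
          rw [hz0, h0, zero_smul]
        · rw [h1, one_smul]
          exact hex z h1
      have hAdd : A = Matrix.vecMulVec d d := by
        ext k l
        have := congrFun (hAz (Pi.single l 1)) k
        rw [Matrix.mulVec_single_one] at this
        simp only [Matrix.transpose_apply, Matrix.col_apply, dotProduct_single, mul_one,
          Pi.smul_apply, smul_eq_mul] at this
        rw [Matrix.vecMulVec_apply, this, mul_comm]
      exact ⟨1, fun _ => d, by omega, by rw [hAdd]; simp⟩

/-- The bridge between vector decompositions and clique realizations. -/
lemma clique_eq (f : Fin n → ZMod 2) {i j : Fin n} (hij : i ≠ j) :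
    cliqueAdj n (Finset.univ.filter (fun k => f k = 1)) i j = f i * f j := by
  classical
  simp only [cliqueAdj, Matrix.of_apply, Finset.mem_filter, Finset.mem_univ, true_and]
  rcases z2 (f i) with hfi | hfi <;> rcases z2 (f j) with hfj | hfj <;>
    simp [hfi, hfj, hij]

/-- From a rank-one decomposition, get a realization. -/
lemma realizes_of_decomp (M : Matrix (Fin n) (Fin n) (ZMod 2)) (m : ℕ)
    (f : Fin m → (Fin n → ZMod 2))
    (h : ∀ i j : Fin n, i ≠ j → M i j = ∑ t : Fin m, f t i * f t j) :
    realizes n m M := by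
  classical
  refine ⟨fun t => Finset.univ.filter (fun k => f t k = 1), fun i j hij => ?_⟩
  rw [h i j hij]
  exact Finset.sum_congr rfl fun t _ => (clique_eq (f t) hij).symm

lemma clique_eq' (S : Finset (Fin n)) {i j : Fin n} (hij : i ≠ j) :
    cliqueAdj n S i j =
      ((if i ∈ S then 1 else 0 : ZMod 2) * (if j ∈ S then 1 else 0)) := by
  simp only [cliqueAdj, Matrix.of_apply]
  by_cases hi : i ∈ S <;> by_cases hj : j ∈ S <;> simp [hi, hj, hij]

end MinrankAux

/-- `minrank₂(G) ≤ t(G) ≤ minrank₂(G) + 1`. -/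
theorem minrank_le_t_le_minrank_succ (n : ℕ) (M : Matrix (Fin n) (Fin n) (ZMod 2))
    (hsymm : M.IsSymm) (hdiag : ∀ i, M i i = 0) :
    minrank2 n M ≤ tG n M ∧ tG n M ≤ minrank2 n M + 1 := by
  classical
  open MinrankAux Matrix in
  have hne : {r | ∃ D : Matrix (Fin n) (Fin n) (ZMod 2),
      D.IsDiag ∧ (D + M).rank = r}.Nonempty :=
    ⟨M.rank, 0, Matrix.isDiag_zero, by rw [zero_add]⟩
  obtain ⟨D, hD, hDr⟩ := Nat.sInf_mem hne
  set r := minrank2 n M with hrdef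
  set A := D + M with hAdef
  have hAsymm : A.IsSymm := hD.isSymm.add hsymm
  have hAoff : ∀ i j, i ≠ j → A i j = M i j := fun i j hij => by
    rw [hAdef, Matrix.add_apply, hD hij, zero_add]
  -- a decomposition of `A` into at most `r + 1` symmetric rank-one matrices
  have hdec : ∃ m, m ≤ r + 1 ∧ ∃ f : Fin m → (Fin n → ZMod 2),
      A = ∑ t : Fin m, Matrix.vecMulVec (f t) (f t) := by
    by_cases h0 : A = 0 ∨ ∃ i, A i i ≠ 0
    · obtain ⟨m, f, hm, hf⟩ := decomp r A hAsymm (le_of_eq hDr) h0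
      exact ⟨m, by omega, f, hf⟩
    · push_neg at h0
      obtain ⟨hA0, hAdg⟩ := h0
      obtain ⟨k, l, hkl⟩ : ∃ k l, A k l ≠ 0 := by
        by_contra hc
        push_neg at hc
        exact hA0 (Matrix.ext fun k l => hc k l)
      set s : Fin n → ZMod 2 := Pi.single l 1 with hs
      set c : Fin n → ZMod 2 := A *ᵥ s with hc
      have hck : c k ≠ 0 := by
        rw [hc, hs, Matrix.mulVec_single]
        simpa using hkl
      set B := A + Matrix.vecMulVec c c with hB
      have hBsymm : B.IsSymm := hAsymm.add (vecMulVec_symm c)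
      have hcc : Matrix.vecMulVec c c = A * Matrix.vecMulVec s c := by
        ext i j
        rw [Matrix.mul_apply]
        simp only [Matrix.vecMulVec_apply]
        show (A *ᵥ s) i * c j = _
        show (∑ m, A i m * s m) * c j = ∑ m, A i m * (s m * c j)
        rw [Finset.sum_mul]
        exact Finset.sum_congr rfl fun m _ => by ring
      have hBrank : B.rank ≤ r := by
        have : B = A * (1 + Matrix.vecMulVec s c) := by
          rw [Matrix.mul_add, Matrix.mul_one, ← hcc, hB]
        rw [this]
        exact (Matrix.rank_mul_le_left _ _).trans (le_of_eq hDr)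
      have hBd : B = 0 ∨ ∃ j, B j j ≠ 0 := by
        right
        refine ⟨k, ?_⟩
        have : B k k = A k k + c k * c k := by
          rw [hB, Matrix.add_apply, Matrix.vecMulVec_apply]
        rw [this, hAdg k, z2mul, zero_add]
        exact hck
      obtain ⟨m, f, hm, hf⟩ := decomp r B hBsymm hBrank hBd
      refine ⟨m + 1, by omega, Fin.cons c f, ?_⟩
      have hvv : Matrix.vecMulVec c c + Matrix.vecMulVec c c =
          (0 : Matrix (Fin n) (Fin n) (ZMod 2)) := by
        ext a b; exact z2add _
      rw [Fin.sum_univ_succ]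
      simp only [Fin.cons_zero, Fin.cons_succ]
      rw [← hf, hB, add_left_comm, hvv, add_zero]
  obtain ⟨m, hm, f, hf⟩ := hdec
  -- upper bound
  have hrez : realizes n m M := by
    refine realizes_of_decomp M m f fun i j hij => ?_
    rw [← hAoff i j hij, hf, Matrix.sum_apply]
    exact Finset.sum_congr rfl fun t _ => by rw [Matrix.vecMulVec_apply]
  have hub : tG n M ≤ r + 1 := le_trans (Nat.sInf_le hrez) hm
  -- lower bound
  have hTne : {m | realizes n m M}.Nonempty := ⟨m, hrez⟩
  obtain ⟨S, hS⟩ := Nat.sInf_mem hTne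
  set g : Fin (tG n M) → (Fin n → ZMod 2) :=
    fun t i => if i ∈ S t then 1 else 0 with hg
  set A' := ∑ t : Fin (tG n M), Matrix.vecMulVec (g t) (g t) with hA'
  have hoff : ∀ i j, i ≠ j → A' i j = M i j := by
    intro i j hij
    rw [hA', Matrix.sum_apply, hS i j hij]
    refine Finset.sum_congr rfl fun t _ => ?_
    rw [Matrix.vecMulVec_apply, clique_eq' (S t) hij]
  have hD' : (A' + M).IsDiag := by
    intro i j hij
    rw [Matrix.add_apply, hoff i j hij]
    exact z2add _
  have hsum : A' + M + M = A' := by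
    ext i j
    simp only [Matrix.add_apply]
    rw [add_assoc, z2add, add_zero]
  have hlb : r ≤ tG n M := by
    have h1 : r ≤ (A' + M + M).rank := Nat.sInf_le ⟨A' + M, hD', rfl⟩
    rw [hsum] at h1
    exact h1.trans (rank_sum_le _ g)
  exact ⟨hlb, hub⟩
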